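/- Let k be a field, let R be a Hopf k-algebra, and suppose the Ore extension T=R[x;σ,δ] is a Hopf algebra containing R as a Hopf subalgebra, with ε(x)=0 and Δ(x) = s(1⊗x) + t(x⊗1) + v(x⊗x) + w for some s,t,v,w ∈ R⊗_k R. Then (ε⊗I)(s) = 1 and (I⊗ε)(t) = 1 in R, and coassociativity of Δ yields the following identities in R⊗_k R⊗_k R: (I⊗Δ)(v)·(1⊗v) = (Δ⊗I)(v)·(v⊗1); (I⊗Δ)(s)·(1⊗t) = (Δ⊗I)(t)·(s⊗1); (I⊗Δ)(s)·(1⊗v) = (Δ⊗I)(v)·(s⊗1); (I⊗Δ)(s)·(1⊗s) = (Δ⊗I)(s) + (Δ⊗I)(v)·(w⊗1); and (I⊗Δ)(v)·(1⊗t) = (Δ⊗I)(t)·(v⊗1). -/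

import Mathlib

open scoped TensorProduct

set_option maxHeartbeats 2000000
set_option synthInstance.maxHeartbeats 200000

/-- `T` is an Ore (skew polynomial) extension `R[x; σ, δ]` of `R`, embedded via `ι`:
`δ` is a `σ`-derivation, `ι` is injective, `x · ι(r) = ι(σ r) · x + ι(δ r)`, and
`T` is a free left `R`-module with basis `{xⁱ : i ≥ 0}`. -/
structure IsOreExtension (k : Type*) {R T : Type*} [Field k] [Ring R] [Algebra k R]
    [Ring T] [Algebra k T] (σ : R ≃ₐ[k] R) (δ : R →ₗ[k] R) (ι : R →ₐ[k] T) (x : T) : Prop where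
  isSigmaDerivation : ∀ a b : R, δ (a * b) = σ a * δ b + δ a * b
  injective : Function.Injective ι
  rel : ∀ r : R, x * ι r = ι (σ r) * x + ι (δ r)
  free : ∀ t : T, ∃! a : ℕ →₀ R, t = a.sum fun i r => ι r * x ^ i

/-- A Hopf `k`-algebra structure on the `k`-algebra `T`, bundled as data. -/
structure HopfAlgebraStructure (k T : Type*) [Field k] [Ring T] [Algebra k T] where
  comul : T →ₗ[k] T ⊗[k] T
  counit : T →ₗ[k] k
  antipode : T →ₗ[k] T
  comul_one : comul 1 = 1
  comul_mul : ∀ a b : T, comul (a * b) = comul a * comul b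
  counit_one : counit 1 = 1
  counit_mul : ∀ a b : T, counit (a * b) = counit a * counit b
  coassoc : ∀ t : T, TensorProduct.map comul LinearMap.id (comul t) =
      (TensorProduct.assoc k T T T).symm (TensorProduct.map LinearMap.id comul (comul t))
  counit_comul : ∀ t : T,
      TensorProduct.lid k T (TensorProduct.map counit LinearMap.id (comul t)) = t
  comul_counit : ∀ t : T,
      TensorProduct.rid k T (TensorProduct.map LinearMap.id counit (comul t)) = t
  antipode_mul_id : ∀ t : T,
      LinearMap.mul' k T (TensorProduct.map antipode LinearMap.id (comul t))
        = algebraMap k T (counit t)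
  id_mul_antipode : ∀ t : T,
      LinearMap.mul' k T (TensorProduct.map LinearMap.id antipode (comul t))
        = algebraMap k T (counit t)

/-- The Hopf algebra structure `H` on `T` extends that of the Hopf algebra `R`, i.e. `R` is
(the image of) a Hopf subalgebra of `T` via the injective algebra map `ι`. -/
def ExtendsHopf (k : Type*) {R T : Type*} [Field k] [Ring R] [HopfAlgebra k R]
    [Ring T] [Algebra k T] (ι : R →ₐ[k] T) (H : HopfAlgebraStructure k T) : Prop :=
  (∀ r : R, H.counit (ι r) = Coalgebra.counit r) ∧
  (∀ r : R, H.comul (ι r) =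
      TensorProduct.map ι.toLinearMap ι.toLinearMap (Coalgebra.comul r)) ∧
  (∀ r : R, H.antipode (ι r) = ι (HopfAlgebra.antipode (R := k) r))

section Aux
variable {k R T : Type*} [Field k] [Ring R] [Algebra k R] [Ring T] [Algebra k T]
  {σ : R ≃ₐ[k] R} {δ : R →ₗ[k] R} {ι : R →ₐ[k] T} {x : T}

noncomputable def oreCoeff (hT : IsOreExtension k σ δ ι x) (t : T) : ℕ →₀ R :=
  (hT.free t).choose

lemma oreCoeff_spec (hT : IsOreExtension k σ δ ι x) (t : T) :
    t = (oreCoeff hT t).sum fun i r => ι r * x ^ i :=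
  (hT.free t).choose_spec.1

lemma oreCoeff_unique (hT : IsOreExtension k σ δ ι x) {t : T} {a : ℕ →₀ R}
    (h : t = a.sum fun i r => ι r * x ^ i) : oreCoeff hT t = a :=
  ((hT.free t).choose_spec.2 a h).symm

lemma oreCoeff_add (hT : IsOreExtension k σ δ ι x) (t₁ t₂ : T) :
    oreCoeff hT (t₁ + t₂) = oreCoeff hT t₁ + oreCoeff hT t₂ := by
  apply oreCoeff_unique
  rw [Finsupp.sum_add_index' (by simp) (by intro i b₁ b₂; rw [map_add, add_mul])]
  rw [← oreCoeff_spec, ← oreCoeff_spec]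

lemma oreCoeff_smul (hT : IsOreExtension k σ δ ι x) (a : k) (t : T) :
    oreCoeff hT (a • t) = a • oreCoeff hT t := by
  apply oreCoeff_unique
  rw [Finsupp.sum_smul_index' (by simp)]
  have : ∀ i (r : R), ι (a • r) * x ^ i = a • (ι r * x ^ i) := by
    intro i r; rw [map_smul, smul_mul_assoc]
  simp only [this]
  rw [← Finsupp.smul_sum, ← oreCoeff_spec]

/-- coefficient extraction as a linear map -/
noncomputable def oreC (hT : IsOreExtension k σ δ ι x) (i : ℕ) : T →ₗ[k] R where
  toFun t := oreCoeff hT t i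
  map_add' t₁ t₂ := by rw [oreCoeff_add]; rfl
  map_smul' a t := by rw [oreCoeff_smul]; rfl

lemma oreC_apply (hT : IsOreExtension k σ δ ι x) (i j : ℕ) (r : R) :
    oreC hT i (ι r * x ^ j) = if j = i then r else 0 := by
  have : oreCoeff hT (ι r * x ^ j) = Finsupp.single j r := by
    apply oreCoeff_unique
    rw [Finsupp.sum_single_index (by simp)]
  show oreCoeff hT (ι r * x ^ j) i = _
  rw [this, Finsupp.single_apply]

end Aux

section Aux2
variable {k R T : Type*} [Field k] [Ring R] [Algebra k R] [Ring T] [Algebra k T]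

/-- `ι ⊗ ι` as an algebra hom. -/
noncomputable def PhiA (ι : R →ₐ[k] T) : R ⊗[k] R →ₐ[k] T ⊗[k] T :=
  Algebra.TensorProduct.map ι ι

noncomputable def PsiA (ι : R →ₐ[k] T) : (R ⊗[k] R) ⊗[k] R →ₐ[k] (T ⊗[k] T) ⊗[k] T :=
  Algebra.TensorProduct.map (PhiA ι) ι

noncomputable def PsiA' (ι : R →ₐ[k] T) : R ⊗[k] (R ⊗[k] R) →ₐ[k] T ⊗[k] (T ⊗[k] T) :=
  Algebra.TensorProduct.map ι (PhiA ι)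

lemma PhiA_tmul (ι : R →ₐ[k] T) (a b : R) : PhiA ι (a ⊗ₜ[k] b) = ι a ⊗ₜ[k] ι b :=
  Algebra.TensorProduct.map_tmul ι ι a b

lemma PsiA_tmul (ι : R →ₐ[k] T) (y : R ⊗[k] R) (r : R) :
    PsiA ι (y ⊗ₜ[k] r) = PhiA ι y ⊗ₜ[k] ι r :=
  Algebra.TensorProduct.map_tmul (PhiA ι) ι y r

lemma PsiA'_tmul (ι : R →ₐ[k] T) (r : R) (y : R ⊗[k] R) :
    PsiA' ι (r ⊗ₜ[k] y) = ι r ⊗ₜ[k] PhiA ι y :=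
  Algebra.TensorProduct.map_tmul ι (PhiA ι) r y

lemma PhiA_eq (ι : R →ₐ[k] T) (p : R ⊗[k] R) :
    TensorProduct.map ι.toLinearMap ι.toLinearMap p = PhiA ι p := by
  induction p using TensorProduct.induction_on with
  | zero => simp
  | tmul a b => simp [PhiA]
  | add u v hu hv => simp [map_add, hu, hv]

noncomputable def epsT (H : HopfAlgebraStructure k T) : T →ₐ[k] k :=
  AlgHom.ofLinearMap H.counit H.counit_one H.counit_mul

noncomputable def deltaT (H : HopfAlgebraStructure k T) : T →ₐ[k] T ⊗[k] T :=
  AlgHom.ofLinearMap H.comul H.comul_one H.comul_mul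

lemma deltaT_apply (H : HopfAlgebraStructure k T) (u : T) : deltaT H u = H.comul u := rfl

noncomputable def D1A (H : HopfAlgebraStructure k T) : T ⊗[k] T →ₐ[k] (T ⊗[k] T) ⊗[k] T :=
  Algebra.TensorProduct.map (deltaT H) (AlgHom.id k T)

noncomputable def D2A (H : HopfAlgebraStructure k T) : T ⊗[k] T →ₐ[k] T ⊗[k] (T ⊗[k] T) :=
  Algebra.TensorProduct.map (AlgHom.id k T) (deltaT H)

lemma D1A_tmul (H : HopfAlgebraStructure k T) (a b : T) :
    D1A H (a ⊗ₜ[k] b) = deltaT H a ⊗ₜ[k] b :=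
  Algebra.TensorProduct.map_tmul (deltaT H) (AlgHom.id k T) a b

lemma D2A_tmul (H : HopfAlgebraStructure k T) (a b : T) :
    D2A H (a ⊗ₜ[k] b) = a ⊗ₜ[k] deltaT H b :=
  Algebra.TensorProduct.map_tmul (AlgHom.id k T) (deltaT H) a b

lemma D1A_eq (H : HopfAlgebraStructure k T) (u : T ⊗[k] T) :
    TensorProduct.map H.comul LinearMap.id u = D1A H u := by
  induction u using TensorProduct.induction_on with
  | zero => simp
  | tmul a b => simp [D1A, deltaT_apply]
  | add u v hu hv => simp [map_add, hu, hv]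

lemma D2A_eq (H : HopfAlgebraStructure k T) (u : T ⊗[k] T) :
    TensorProduct.map LinearMap.id H.comul u = D2A H u := by
  induction u using TensorProduct.induction_on with
  | zero => simp
  | tmul a b => simp [D2A, deltaT_apply]
  | add u v hu hv => simp [map_add, hu, hv]

lemma assocT_symm_eq (u : T ⊗[k] (T ⊗[k] T)) :
    (TensorProduct.assoc k T T T).symm u = (Algebra.TensorProduct.assoc k k k T T T).symm u := by
  apply (Algebra.TensorProduct.assoc k k k T T T).injective
  have hfwd : ∀ z : (T ⊗[k] T) ⊗[k] T,
      Algebra.TensorProduct.assoc k k k T T T z = TensorProduct.assoc k T T T z := fun z => rfl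
  rw [AlgEquiv.apply_symm_apply, hfwd]
  exact (TensorProduct.assoc k T T T).apply_symm_apply u

noncomputable def ELA (H : HopfAlgebraStructure k T) : T ⊗[k] T →ₐ[k] T :=
  (Algebra.TensorProduct.lid k T).toAlgHom.comp
    (Algebra.TensorProduct.map (epsT H) (AlgHom.id k T))

noncomputable def ERA (H : HopfAlgebraStructure k T) : T ⊗[k] T →ₐ[k] T :=
  (Algebra.TensorProduct.rid k k T).toAlgHom.comp
    (Algebra.TensorProduct.map (AlgHom.id k T) (epsT H))

lemma ELA_eq (H : HopfAlgebraStructure k T) (u : T ⊗[k] T) :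
    ELA H u = TensorProduct.lid k T (TensorProduct.map H.counit LinearMap.id u) := by
  induction u using TensorProduct.induction_on with
  | zero => simp
  | tmul a b => simp [ELA, epsT]
  | add u v hu hv => simp [map_add, hu, hv]

lemma ERA_eq (H : HopfAlgebraStructure k T) (u : T ⊗[k] T) :
    ERA H u = TensorProduct.rid k T (TensorProduct.map LinearMap.id H.counit u) := by
  induction u using TensorProduct.induction_on with
  | zero => simp
  | tmul a b => simp [ERA, epsT]
  | add u v hu hv => simp [map_add, hu, hv]

end Aux2
section Theta
variable {k R T : Type*} [Field k] [Ring R] [Algebra k R] [Ring T] [Algebra k T]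
  {σ : R ≃ₐ[k] R} {δ : R →ₗ[k] R} {ι : R →ₐ[k] T} {x : T}

noncomputable def theta (hT : IsOreExtension k σ δ ι x) (a b c : ℕ) :
    (T ⊗[k] T) ⊗[k] T →ₗ[k] (R ⊗[k] R) ⊗[k] R :=
  TensorProduct.map (TensorProduct.map (oreC hT a) (oreC hT b)) (oreC hT c)

lemma theta_extract (hT : IsOreExtension k σ δ ι x) (a b c a' b' c' : ℕ)
    (u : (R ⊗[k] R) ⊗[k] R) :
    theta hT a b c (PsiA ι u * (((x ^ a') ⊗ₜ[k] (x ^ b')) ⊗ₜ[k] (x ^ c')))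
      = if a' = a ∧ b' = b ∧ c' = c then u else 0 := by
  induction u using TensorProduct.induction_on with
  | zero => simp
  | tmul y r =>
    induction y using TensorProduct.induction_on with
    | zero => simp [TensorProduct.zero_tmul]
    | tmul p q =>
      rw [show PsiA ι ((p ⊗ₜ[k] q) ⊗ₜ[k] r) = ((ι p ⊗ₜ[k] ι q) ⊗ₜ[k] ι r) from by
        rw [PsiA_tmul, PhiA_tmul]]
      rw [Algebra.TensorProduct.tmul_mul_tmul, Algebra.TensorProduct.tmul_mul_tmul]
      rw [show theta hT a b c
            (((ι p * x ^ a') ⊗ₜ[k] (ι q * x ^ b')) ⊗ₜ[k] (ι r * x ^ c'))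
          = ((oreC hT a (ι p * x ^ a')) ⊗ₜ[k] (oreC hT b (ι q * x ^ b'))) ⊗ₜ[k]
              (oreC hT c (ι r * x ^ c')) from by
          rw [show theta hT a b c = TensorProduct.map
              (TensorProduct.map (oreC hT a) (oreC hT b)) (oreC hT c) from rfl,
            TensorProduct.map_tmul, TensorProduct.map_tmul]]
      rw [oreC_apply, oreC_apply, oreC_apply]
      by_cases ha : a' = a <;> by_cases hb : b' = b <;> by_cases hc : c' = c <;>
        simp [ha, hb, hc]
    | add y₁ y₂ h₁ h₂ =>
      rw [TensorProduct.add_tmul, map_add, add_mul, map_add, h₁, h₂]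
      split_ifs <;> simp [TensorProduct.add_tmul]
  | add u₁ u₂ h₁ h₂ =>
    rw [map_add, add_mul, map_add, h₁, h₂]
    split_ifs <;> simp

end Theta

/-- Suppose the Ore extension `T = R[x; σ, δ]` of the Hopf `k`-algebra `R` is a Hopf algebra
containing `R` as a Hopf subalgebra, with `ε(x) = 0` and
`Δ(x) = s(1 ⊗ x) + t(x ⊗ 1) + v(x ⊗ x) + w`.  Then `(ε ⊗ I)(s) = 1`, `(I ⊗ ε)(t) = 1`, and
coassociativity yields equations (2)–(6) of the paper:
`(I⊗Δ)(v)·(1⊗v) = (Δ⊗I)(v)·(v⊗1)`, `(I⊗Δ)(s)·(1⊗t) = (Δ⊗I)(t)·(s⊗1)`,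
`(I⊗Δ)(s)·(1⊗v) = (Δ⊗I)(v)·(s⊗1)`, `(I⊗Δ)(s)·(1⊗s) = (Δ⊗I)(s) + (Δ⊗I)(v)·(w⊗1)` and
`(I⊗Δ)(v)·(1⊗t) = (Δ⊗I)(t)·(v⊗1)` in `R ⊗ₖ R ⊗ₖ R`. -/
theorem stmt7 {k R T : Type*} [Field k] [Ring R] [HopfAlgebra k R] [Ring T] [Algebra k T]
    (σ : R ≃ₐ[k] R) (δ : R →ₗ[k] R) (ι : R →ₐ[k] T) (x : T)
    (hT : IsOreExtension k σ δ ι x)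
    (H : HopfAlgebraStructure k T) (hH : ExtendsHopf k ι H)
    (hε : H.counit x = 0)
    (s t v w : R ⊗[k] R)
    (hx : H.comul x
        = TensorProduct.map ι.toLinearMap ι.toLinearMap s * ((1 : T) ⊗ₜ[k] x)
          + TensorProduct.map ι.toLinearMap ι.toLinearMap t * (x ⊗ₜ[k] (1 : T))
          + TensorProduct.map ι.toLinearMap ι.toLinearMap v * (x ⊗ₜ[k] x)
          + TensorProduct.map ι.toLinearMap ι.toLinearMap w) :
    TensorProduct.lid k R
        (TensorProduct.map (Coalgebra.counit (R := k)) (LinearMap.id : R →ₗ[k] R) s) = 1 ∧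
    TensorProduct.rid k R
        (TensorProduct.map (LinearMap.id : R →ₗ[k] R) (Coalgebra.counit (R := k)) t) = 1 ∧
    (TensorProduct.assoc k R R R).symm
        (TensorProduct.map (LinearMap.id : R →ₗ[k] R) (Coalgebra.comul (R := k)) v
          * ((1 : R) ⊗ₜ[k] v))
      = TensorProduct.map (Coalgebra.comul (R := k)) (LinearMap.id : R →ₗ[k] R) v
          * (v ⊗ₜ[k] (1 : R)) ∧
    (TensorProduct.assoc k R R R).symm
        (TensorProduct.map (LinearMap.id : R →ₗ[k] R) (Coalgebra.comul (R := k)) s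
          * ((1 : R) ⊗ₜ[k] t))
      = TensorProduct.map (Coalgebra.comul (R := k)) (LinearMap.id : R →ₗ[k] R) t
          * (s ⊗ₜ[k] (1 : R)) ∧
    (TensorProduct.assoc k R R R).symm
        (TensorProduct.map (LinearMap.id : R →ₗ[k] R) (Coalgebra.comul (R := k)) s
          * ((1 : R) ⊗ₜ[k] v))
      = TensorProduct.map (Coalgebra.comul (R := k)) (LinearMap.id : R →ₗ[k] R) v
          * (s ⊗ₜ[k] (1 : R)) ∧
    (TensorProduct.assoc k R R R).symm
        (TensorProduct.map (LinearMap.id : R →ₗ[k] R) (Coalgebra.comul (R := k)) s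
          * ((1 : R) ⊗ₜ[k] s))
      = TensorProduct.map (Coalgebra.comul (R := k)) (LinearMap.id : R →ₗ[k] R) s
          + TensorProduct.map (Coalgebra.comul (R := k)) (LinearMap.id : R →ₗ[k] R) v
            * (w ⊗ₜ[k] (1 : R)) ∧
    (TensorProduct.assoc k R R R).symm
        (TensorProduct.map (LinearMap.id : R →ₗ[k] R) (Coalgebra.comul (R := k)) v
          * ((1 : R) ⊗ₜ[k] t))
      = TensorProduct.map (Coalgebra.comul (R := k)) (LinearMap.id : R →ₗ[k] R) t
          * (v ⊗ₜ[k] (1 : R)) := by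
  obtain ⟨hcount, hcomul, -⟩ := hH
  set Dl : R ⊗[k] R →ₗ[k] (R ⊗[k] R) ⊗[k] R :=
    TensorProduct.map (Coalgebra.comul (R := k) (A := R)) (LinearMap.id : R →ₗ[k] R) with hDl
  set Dr : R ⊗[k] R →ₗ[k] R ⊗[k] (R ⊗[k] R) :=
    TensorProduct.map (LinearMap.id : R →ₗ[k] R) (Coalgebra.comul (R := k) (A := R)) with hDr
  set aR := (TensorProduct.assoc k R R R).symm with haRdef
  -- Δ(x) with explicit monomials
  have hΔx : deltaT H x
      = PhiA ι s * ((x ^ 0) ⊗ₜ[k] (x ^ 1)) + PhiA ι t * ((x ^ 1) ⊗ₜ[k] (x ^ 0))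
        + PhiA ι v * ((x ^ 1) ⊗ₜ[k] (x ^ 1)) + PhiA ι w * ((x ^ 0) ⊗ₜ[k] (x ^ 0)) := by
    rw [deltaT_apply, hx]
    simp only [pow_zero, pow_one, PhiA_eq, ← Algebra.TensorProduct.one_def, mul_one]
  -- key uniqueness consequence
  have hCx : oreC hT 1 x = 1 := by
    have hx1 : oreC hT 1 (ι (1 : R) * x ^ 1) = 1 := by rw [oreC_apply]; simp
    simpa using hx1
  have key1 : ∀ p q : R, x = ι p * x + ι q → p = 1 := by
    intro p q h
    have h1 : oreC hT 1 (ι p * x + ι q) = p := by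
      rw [map_add, show ι p * x = ι p * x ^ 1 from by rw [pow_one],
        show (ι q : T) = ι q * x ^ 0 from by simp, oreC_apply, oreC_apply]
      simp
    rw [← h, hCx] at h1
    exact h1.symm
  -- Claim 1
  have hELΦ : ∀ p : R ⊗[k] R, ELA H (PhiA ι p)
      = ι (TensorProduct.lid k R
          (TensorProduct.map (Coalgebra.counit (R := k)) LinearMap.id p)) := by
    intro p
    induction p using TensorProduct.induction_on with
    | zero => simp
    | tmul a b =>
      rw [PhiA_tmul ι a b, ELA_eq]
      simp [hcount a, map_smul]
    | add p₁ p₂ h₁ h₂ => simp only [map_add, h₁, h₂]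
  have goal1 : TensorProduct.lid k R
      (TensorProduct.map (Coalgebra.counit (R := k)) (LinearMap.id : R →ₗ[k] R) s) = 1 := by
    apply key1 _ (TensorProduct.lid k R
      (TensorProduct.map (Coalgebra.counit (R := k)) LinearMap.id w))
    have hELx : ELA H (deltaT H x) = x := by
      rw [ELA_eq, deltaT_apply]; exact H.counit_comul x
    conv_lhs => rw [← hELx]
    rw [hΔx, map_add, map_add, map_add, map_mul, map_mul, map_mul, map_mul,
      hELΦ, hELΦ, hELΦ, hELΦ]
    rw [show ELA H ((x ^ 0) ⊗ₜ[k] (x ^ 1)) = x from by rw [ELA_eq]; simp [H.counit_one],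
      show ELA H ((x ^ 1) ⊗ₜ[k] (x ^ 0)) = 0 from by rw [ELA_eq]; simp [hε],
      show ELA H ((x ^ 1) ⊗ₜ[k] (x ^ 1)) = 0 from by rw [ELA_eq]; simp [hε],
      show ELA H ((x ^ 0) ⊗ₜ[k] (x ^ 0)) = 1 from by rw [ELA_eq]; simp [H.counit_one]]
    rw [mul_zero, mul_zero, mul_one, add_zero, add_zero]
  -- Claim 2
  have hERΦ : ∀ p : R ⊗[k] R, ERA H (PhiA ι p)
      = ι (TensorProduct.rid k R
          (TensorProduct.map LinearMap.id (Coalgebra.counit (R := k)) p)) := by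
    intro p
    induction p using TensorProduct.induction_on with
    | zero => simp
    | tmul a b =>
      rw [PhiA_tmul ι a b, ERA_eq]
      simp [hcount b, map_smul]
    | add p₁ p₂ h₁ h₂ => simp only [map_add, h₁, h₂]
  have goal2 : TensorProduct.rid k R
      (TensorProduct.map (LinearMap.id : R →ₗ[k] R) (Coalgebra.counit (R := k)) t) = 1 := by
    apply key1 _ (TensorProduct.rid k R
      (TensorProduct.map LinearMap.id (Coalgebra.counit (R := k)) w))
    have hERx : ERA H (deltaT H x) = x := by
      rw [ERA_eq, deltaT_apply]; exact H.comul_counit x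
    conv_lhs => rw [← hERx]
    rw [hΔx, map_add, map_add, map_add, map_mul, map_mul, map_mul, map_mul,
      hERΦ, hERΦ, hERΦ, hERΦ]
    rw [show ERA H ((x ^ 0) ⊗ₜ[k] (x ^ 1)) = 0 from by rw [ERA_eq]; simp [hε],
      show ERA H ((x ^ 1) ⊗ₜ[k] (x ^ 0)) = x from by rw [ERA_eq]; simp [H.counit_one],
      show ERA H ((x ^ 1) ⊗ₜ[k] (x ^ 1)) = 0 from by rw [ERA_eq]; simp [hε],
      show ERA H ((x ^ 0) ⊗ₜ[k] (x ^ 0)) = 1 from by rw [ERA_eq]; simp [H.counit_one]]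
    rw [mul_zero, mul_zero, mul_one, zero_add, add_zero]
  -- coassociativity machinery
  have hD1Φ : ∀ p : R ⊗[k] R, D1A H (PhiA ι p) = PsiA ι (Dl p) := by
    intro p
    induction p using TensorProduct.induction_on with
    | zero => simp
    | tmul a b =>
      rw [PhiA_tmul ι a b]
      rw [D1A_tmul]
      rw [show deltaT H (ι a) = PhiA ι (Coalgebra.comul a) from by
        rw [deltaT_apply, hcomul a, PhiA_eq]]
      rw [hDl]
      rw [TensorProduct.map_tmul, PsiA_tmul]
      rfl
    | add p₁ p₂ h₁ h₂ => simp only [map_add, h₁, h₂]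
  have hD2Φ : ∀ p : R ⊗[k] R, D2A H (PhiA ι p) = PsiA' ι (Dr p) := by
    intro p
    induction p using TensorProduct.induction_on with
    | zero => simp
    | tmul a b =>
      rw [PhiA_tmul ι a b]
      rw [D2A_tmul]
      rw [show deltaT H (ι b) = PhiA ι (Coalgebra.comul b) from by
        rw [deltaT_apply, hcomul b, PhiA_eq]]
      rw [hDr]
      rw [TensorProduct.map_tmul, PsiA'_tmul]
      rfl
    | add p₁ p₂ h₁ h₂ => simp only [map_add, h₁, h₂]
  have haΨ : ∀ q : R ⊗[k] (R ⊗[k] R),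
      (Algebra.TensorProduct.assoc k k k T T T).symm (PsiA' ι q) = PsiA ι (aR q) := by
    intro q
    induction q using TensorProduct.induction_on with
    | zero => simp
    | tmul a y =>
      induction y using TensorProduct.induction_on with
      | zero => simp [TensorProduct.tmul_zero]
      | tmul b c => simp [PsiA'_tmul, PsiA_tmul, PhiA_tmul, haRdef]
      | add y₁ y₂ h₁ h₂ => simp only [TensorProduct.tmul_add, map_add, h₁, h₂]
    | add q₁ q₂ h₁ h₂ => simp only [map_add, h₁, h₂]
  have haRmul : ∀ q q' : R ⊗[k] (R ⊗[k] R), aR (q * q') = aR q * aR q' := by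
    have h : ∀ u : R ⊗[k] (R ⊗[k] R),
        aR u = (Algebra.TensorProduct.assoc k k k R R R).symm u := by
      intro u; rw [haRdef]; exact assocT_symm_eq u
    intro q q'; rw [h, h, h, map_mul]
  have hcoassocx : D1A H (deltaT H x)
      = (Algebra.TensorProduct.assoc k k k T T T).symm (D2A H (deltaT H x)) := by
    have h := H.coassoc x
    rw [D1A_eq, D2A_eq, assocT_symm_eq] at h
    exact h
  have hsplit : ∀ (p : R ⊗[k] R) (m : T ⊗[k] T) (y : T),
      (PhiA ι p * m) ⊗ₜ[k] y = PsiA ι (p ⊗ₜ[k] (1 : R)) * (m ⊗ₜ[k] y) := by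
    intro p m y
    rw [show PsiA ι (p ⊗ₜ[k] (1 : R)) = PhiA ι p ⊗ₜ[k] (1 : T) from by rw [PsiA_tmul, map_one]]
    rw [Algebra.TensorProduct.tmul_mul_tmul, one_mul]
  have hsplit' : ∀ (p : R ⊗[k] R) (m : T ⊗[k] T) (y : T),
      y ⊗ₜ[k] (PhiA ι p * m) = PsiA' ι ((1 : R) ⊗ₜ[k] p) * (y ⊗ₜ[k] m) := by
    intro p m y
    rw [show PsiA' ι ((1 : R) ⊗ₜ[k] p) = (1 : T) ⊗ₜ[k] PhiA ι p from by rw [PsiA'_tmul, map_one]]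
    rw [Algebra.TensorProduct.tmul_mul_tmul, one_mul]
  have hexp : ∀ b : ℕ, deltaT H x ⊗ₜ[k] (x ^ b)
      = PsiA ι (s ⊗ₜ[k] (1 : R)) * (((x ^ 0) ⊗ₜ[k] (x ^ 1)) ⊗ₜ[k] (x ^ b))
      + PsiA ι (t ⊗ₜ[k] (1 : R)) * (((x ^ 1) ⊗ₜ[k] (x ^ 0)) ⊗ₜ[k] (x ^ b))
      + PsiA ι (v ⊗ₜ[k] (1 : R)) * (((x ^ 1) ⊗ₜ[k] (x ^ 1)) ⊗ₜ[k] (x ^ b))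
      + PsiA ι (w ⊗ₜ[k] (1 : R)) * (((x ^ 0) ⊗ₜ[k] (x ^ 0)) ⊗ₜ[k] (x ^ b)) := by
    intro b
    rw [hΔx, TensorProduct.add_tmul, TensorProduct.add_tmul, TensorProduct.add_tmul,
      hsplit, hsplit, hsplit, hsplit]
  have hexp' : ∀ a : ℕ, (x ^ a) ⊗ₜ[k] deltaT H x
      = PsiA' ι ((1 : R) ⊗ₜ[k] s) * ((x ^ a) ⊗ₜ[k] ((x ^ 0) ⊗ₜ[k] (x ^ 1)))
      + PsiA' ι ((1 : R) ⊗ₜ[k] t) * ((x ^ a) ⊗ₜ[k] ((x ^ 1) ⊗ₜ[k] (x ^ 0)))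
      + PsiA' ι ((1 : R) ⊗ₜ[k] v) * ((x ^ a) ⊗ₜ[k] ((x ^ 1) ⊗ₜ[k] (x ^ 1)))
      + PsiA' ι ((1 : R) ⊗ₜ[k] w) * ((x ^ a) ⊗ₜ[k] ((x ^ 0) ⊗ₜ[k] (x ^ 0))) := by
    intro a
    rw [hΔx, TensorProduct.tmul_add, TensorProduct.tmul_add, TensorProduct.tmul_add,
      hsplit', hsplit', hsplit', hsplit']
  have hD1m : ∀ a b : ℕ, D1A H ((x ^ a) ⊗ₜ[k] (x ^ b)) = deltaT H (x ^ a) ⊗ₜ[k] (x ^ b) := by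
    intro a b; rw [D1A_tmul]
  have hD2m : ∀ a b : ℕ, D2A H ((x ^ a) ⊗ₜ[k] (x ^ b)) = (x ^ a) ⊗ₜ[k] deltaT H (x ^ b) := by
    intro a b; rw [D2A_tmul]
  have hd0 : deltaT H (x ^ 0) = (x ^ 0) ⊗ₜ[k] (x ^ 0) := by
    simp [Algebra.TensorProduct.one_def]
  have hd1 : deltaT H (x ^ 1) = deltaT H x := by rw [pow_one]
  -- master expansion of the left side of coassociativity
  have hL : D1A H (deltaT H x)
      = PsiA ι (Dl s) * (((x ^ 0) ⊗ₜ[k] (x ^ 0)) ⊗ₜ[k] (x ^ 1))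
      + (PsiA ι (Dl t) * (PsiA ι (s ⊗ₜ[k] (1 : R)) * (((x ^ 0) ⊗ₜ[k] (x ^ 1)) ⊗ₜ[k] (x ^ 0)))
        + PsiA ι (Dl t) * (PsiA ι (t ⊗ₜ[k] (1 : R)) * (((x ^ 1) ⊗ₜ[k] (x ^ 0)) ⊗ₜ[k] (x ^ 0)))
        + PsiA ι (Dl t) * (PsiA ι (v ⊗ₜ[k] (1 : R)) * (((x ^ 1) ⊗ₜ[k] (x ^ 1)) ⊗ₜ[k] (x ^ 0)))
        + PsiA ι (Dl t) * (PsiA ι (w ⊗ₜ[k] (1 : R)) * (((x ^ 0) ⊗ₜ[k] (x ^ 0)) ⊗ₜ[k] (x ^ 0))))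
      + (PsiA ι (Dl v) * (PsiA ι (s ⊗ₜ[k] (1 : R)) * (((x ^ 0) ⊗ₜ[k] (x ^ 1)) ⊗ₜ[k] (x ^ 1)))
        + PsiA ι (Dl v) * (PsiA ι (t ⊗ₜ[k] (1 : R)) * (((x ^ 1) ⊗ₜ[k] (x ^ 0)) ⊗ₜ[k] (x ^ 1)))
        + PsiA ι (Dl v) * (PsiA ι (v ⊗ₜ[k] (1 : R)) * (((x ^ 1) ⊗ₜ[k] (x ^ 1)) ⊗ₜ[k] (x ^ 1)))
        + PsiA ι (Dl v) * (PsiA ι (w ⊗ₜ[k] (1 : R)) * (((x ^ 0) ⊗ₜ[k] (x ^ 0)) ⊗ₜ[k] (x ^ 1))))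
      + PsiA ι (Dl w) * (((x ^ 0) ⊗ₜ[k] (x ^ 0)) ⊗ₜ[k] (x ^ 0)) := by
    conv_lhs => rw [hΔx]
    rw [map_add, map_add, map_add, map_mul, map_mul, map_mul, map_mul,
      hD1Φ, hD1Φ, hD1Φ, hD1Φ, hD1m, hD1m, hD1m, hD1m, hd0, hd1, hexp, hexp]
    simp only [mul_add]
    all_goals abel
  -- master expansion of the right side of coassociativity
  have hmid : D2A H (deltaT H x)
      = PsiA' ι (Dr s) * (PsiA' ι ((1 : R) ⊗ₜ[k] s) * ((x ^ 0) ⊗ₜ[k] ((x ^ 0) ⊗ₜ[k] (x ^ 1))))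
      + (PsiA' ι (Dr s) * (PsiA' ι ((1 : R) ⊗ₜ[k] t) * ((x ^ 0) ⊗ₜ[k] ((x ^ 1) ⊗ₜ[k] (x ^ 0))))
        + PsiA' ι (Dr s) * (PsiA' ι ((1 : R) ⊗ₜ[k] v) * ((x ^ 0) ⊗ₜ[k] ((x ^ 1) ⊗ₜ[k] (x ^ 1))))
        + PsiA' ι (Dr s) * (PsiA' ι ((1 : R) ⊗ₜ[k] w) * ((x ^ 0) ⊗ₜ[k] ((x ^ 0) ⊗ₜ[k] (x ^ 0)))))
      + PsiA' ι (Dr t) * ((x ^ 1) ⊗ₜ[k] ((x ^ 0) ⊗ₜ[k] (x ^ 0)))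
      + (PsiA' ι (Dr v) * (PsiA' ι ((1 : R) ⊗ₜ[k] s) * ((x ^ 1) ⊗ₜ[k] ((x ^ 0) ⊗ₜ[k] (x ^ 1))))
        + PsiA' ι (Dr v) * (PsiA' ι ((1 : R) ⊗ₜ[k] t) * ((x ^ 1) ⊗ₜ[k] ((x ^ 1) ⊗ₜ[k] (x ^ 0))))
        + PsiA' ι (Dr v) * (PsiA' ι ((1 : R) ⊗ₜ[k] v) * ((x ^ 1) ⊗ₜ[k] ((x ^ 1) ⊗ₜ[k] (x ^ 1))))
        + PsiA' ι (Dr v) * (PsiA' ι ((1 : R) ⊗ₜ[k] w) * ((x ^ 1) ⊗ₜ[k] ((x ^ 0) ⊗ₜ[k] (x ^ 0)))))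
      + PsiA' ι (Dr w) * ((x ^ 0) ⊗ₜ[k] ((x ^ 0) ⊗ₜ[k] (x ^ 0))) := by
    conv_lhs => rw [hΔx]
    rw [map_add, map_add, map_add, map_mul, map_mul, map_mul, map_mul,
      hD2Φ, hD2Φ, hD2Φ, hD2Φ, hD2m, hD2m, hD2m, hD2m, hd0, hd1, hexp', hexp']
    simp only [mul_add]
    all_goals abel
  have hR : (Algebra.TensorProduct.assoc k k k T T T).symm (D2A H (deltaT H x))
      = PsiA ι (aR (Dr s)) * (PsiA ι (aR ((1 : R) ⊗ₜ[k] s)) * (((x ^ 0) ⊗ₜ[k] (x ^ 0)) ⊗ₜ[k] (x ^ 1)))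
      + PsiA ι (aR (Dr s)) * (PsiA ι (aR ((1 : R) ⊗ₜ[k] t)) * (((x ^ 0) ⊗ₜ[k] (x ^ 1)) ⊗ₜ[k] (x ^ 0)))
      + PsiA ι (aR (Dr s)) * (PsiA ι (aR ((1 : R) ⊗ₜ[k] v)) * (((x ^ 0) ⊗ₜ[k] (x ^ 1)) ⊗ₜ[k] (x ^ 1)))
      + PsiA ι (aR (Dr s)) * (PsiA ι (aR ((1 : R) ⊗ₜ[k] w)) * (((x ^ 0) ⊗ₜ[k] (x ^ 0)) ⊗ₜ[k] (x ^ 0)))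
      + PsiA ι (aR (Dr t)) * (((x ^ 1) ⊗ₜ[k] (x ^ 0)) ⊗ₜ[k] (x ^ 0))
      + PsiA ι (aR (Dr v)) * (PsiA ι (aR ((1 : R) ⊗ₜ[k] s)) * (((x ^ 1) ⊗ₜ[k] (x ^ 0)) ⊗ₜ[k] (x ^ 1)))
      + PsiA ι (aR (Dr v)) * (PsiA ι (aR ((1 : R) ⊗ₜ[k] t)) * (((x ^ 1) ⊗ₜ[k] (x ^ 1)) ⊗ₜ[k] (x ^ 0)))
      + PsiA ι (aR (Dr v)) * (PsiA ι (aR ((1 : R) ⊗ₜ[k] v)) * (((x ^ 1) ⊗ₜ[k] (x ^ 1)) ⊗ₜ[k] (x ^ 1)))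
      + PsiA ι (aR (Dr v)) * (PsiA ι (aR ((1 : R) ⊗ₜ[k] w)) * (((x ^ 1) ⊗ₜ[k] (x ^ 0)) ⊗ₜ[k] (x ^ 0)))
      + PsiA ι (aR (Dr w)) * (((x ^ 0) ⊗ₜ[k] (x ^ 0)) ⊗ₜ[k] (x ^ 0)) := by
    rw [hmid]
    simp only [map_add, map_mul, haΨ, Algebra.TensorProduct.assoc_symm_tmul]
    all_goals abel
  have main := hL.symm.trans (hcoassocx.trans hR)
  have hθ2 : ∀ (a b c a' b' c' : ℕ) (u u' : (R ⊗[k] R) ⊗[k] R),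
      theta hT a b c (PsiA ι u * (PsiA ι u' * (((x ^ a') ⊗ₜ[k] (x ^ b')) ⊗ₜ[k] (x ^ c'))))
        = if a' = a ∧ b' = b ∧ c' = c then u * u' else 0 := by
    intro a b c a' b' c' u u'
    rw [← mul_assoc, ← map_mul (PsiA ι) u u']
    exact theta_extract hT a b c a' b' c' (u * u')
  refine ⟨goal1, goal2, ?_, ?_, ?_, ?_, ?_⟩
  · -- (I⊗Δ)(v)(1⊗v) = (Δ⊗I)(v)(v⊗1)   index (1,1,1)
    have h := congrArg (theta hT 1 1 1) main
    simp only [map_add, theta_extract, hθ2] at h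
    norm_num at h
    rw [haRmul]
    exact h.symm
  · -- index (0,1,0)
    have h := congrArg (theta hT 0 1 0) main
    simp only [map_add, theta_extract, hθ2] at h
    norm_num at h
    rw [haRmul]
    exact h.symm
  · -- index (0,1,1)
    have h := congrArg (theta hT 0 1 1) main
    simp only [map_add, theta_extract, hθ2] at h
    norm_num at h
    rw [haRmul]
    exact h.symm
  · -- index (0,0,1)
    have h := congrArg (theta hT 0 0 1) main
    simp only [map_add, theta_extract, hθ2] at h
    norm_num at h
    rw [haRmul]
    exact h.symm
  · -- index (1,1,0)
    have h := congrArg (theta hT 1 1 0) main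
    simp only [map_add, theta_extract, hθ2] at h
    norm_num at h
    rw [haRmul]
    exact h.symm
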